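/- Let G be a {K₁,₃**, K₃}-free graph (triangle-free and with no induced K₁,₃**), let C be a longest cycle of G with at least 2 missing vertices, let H be a component of G − V(C) with |V(H)| ≥ 2, let x ∈ V(H), and let u ∈ V(C) be adjacent to x. If C is a longest cycle, then at least one of the edges u⁺²u⁻, u⁺²x lies in E(G), and at least one of u⁻²u⁺, u⁻²x lies in E(G). -/

import Mathlib

open SimpleGraph

def IsCycleEmb {V : Type*} (G : SimpleGraph V) (n : ℕ) (f : ZMod n → V) : Prop :=
  3 ≤ n ∧ Function.Injective f ∧ ∀ i : ZMod n, G.Adj (f i) (f (i + 1))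

def IsLongestCycle {V : Type*} (G : SimpleGraph V) (n : ℕ) (f : ZMod n → V) : Prop :=
  IsCycleEmb G n f ∧ ∀ (m : ℕ) (g : ZMod m → V), IsCycleEmb G m g → m ≤ n

def IsDominatingCycle {V : Type*} (G : SimpleGraph V) (n : ℕ) (f : ZMod n → V) : Prop :=
  IsCycleEmb G n f ∧ ∀ a b : V, G.Adj a b → a ∈ Set.range f ∨ b ∈ Set.range f

def IsCompOutside {V : Type*} (G : SimpleGraph V) (C : Set V) (H : Set V) : Prop :=
  H.Nonempty ∧ Disjoint H C ∧ (G.induce H).Connected ∧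
    ∀ a ∈ H, ∀ b : V, G.Adj a b → b ∉ C → b ∈ H

def TwoConnected {V : Type*} (G : SimpleGraph V) : Prop :=
  3 ≤ Nat.card V ∧ ∀ v : V, (G.induce ({v}ᶜ : Set V)).Connected

def KConnected {V : Type*} (G : SimpleGraph V) (k : ℕ) : Prop :=
  k < Nat.card V ∧ ∀ S : Set V, S.ncard < k → (G.induce (Sᶜ : Set V)).Connected

def HFree {W V : Type*} (H : SimpleGraph W) (G : SimpleGraph V) : Prop :=
  ¬ Nonempty (H ↪g G)

def IsCompleteMultipartite {V : Type*} (G : SimpleGraph V) : Prop :=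
  ∃ s : Setoid V, ∀ a b : V, G.Adj a b ↔ ¬ s.r a b

/-- `W = K₁ + 3K₂`: vertex 0 joined to three disjoint edges 12, 34, 56. -/
def Wgraph : SimpleGraph (Fin 7) :=
  SimpleGraph.fromRel (fun a b =>
    a = 0 ∨ (a = 1 ∧ b = 2) ∨ (a = 3 ∧ b = 4) ∨ (a = 5 ∧ b = 6))

/-- `Z₁`, the paw: triangle 012 plus pendant edge 23. -/
def pawGraph : SimpleGraph (Fin 4) :=
  SimpleGraph.fromRel (fun a b =>
    (a = 0 ∧ b = 1) ∨ (a = 1 ∧ b = 2) ∨ (a = 0 ∧ b = 2) ∨ (a = 2 ∧ b = 3))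

/-- The claw `K₁,₃`. -/
def clawGraph : SimpleGraph (Fin 4) :=
  SimpleGraph.fromRel (fun a _ => a = 0)

/-- `K₄` minus the edge 23. -/
def K4minusGraph : SimpleGraph (Fin 4) :=
  SimpleGraph.fromRel (fun a b => ¬((a = 2 ∧ b = 3) ∨ (a = 3 ∧ b = 2)))

/-- `K₁,₃**`: spider with legs of lengths 2, 2, 1 (center 0, legs 0-1-2, 0-3-4, 0-5). -/
def spider221 : SimpleGraph (Fin 6) :=
  SimpleGraph.fromRel (fun a b =>
    (a = 0 ∧ b = 1) ∨ (a = 1 ∧ b = 2) ∨ (a = 0 ∧ b = 3) ∨ (a = 3 ∧ b = 4) ∨ (a = 0 ∧ b = 5))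

/-- The theta graph `A_s`: two vertices joined by three internally disjoint paths,
each with `s` internal vertices. -/
def thetaGraph (s : ℕ) : SimpleGraph (Fin 2 ⊕ Fin 3 × Fin s) :=
  SimpleGraph.fromRel (fun a b =>
    (∃ (j : Fin 3) (k : Fin s), a = Sum.inl 0 ∧ b = Sum.inr (j, k) ∧ (k : ℕ) = 0) ∨
    (∃ (j : Fin 3) (k : Fin s), a = Sum.inl 1 ∧ b = Sum.inr (j, k) ∧ (k : ℕ) = s - 1) ∨
    (∃ (j : Fin 3) (k l : Fin s), a = Sum.inr (j, k) ∧ b = Sum.inr (j, l) ∧ (l : ℕ) = (k : ℕ) + 1))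

/-- `A′_s = 2K₁ + sK₂`. -/
def APrime (s : ℕ) : SimpleGraph (Fin 2 ⊕ Fin s × Fin 2) :=
  SimpleGraph.fromRel (fun a b =>
    (∃ (i : Fin 2) (x : Fin s × Fin 2), a = Sum.inl i ∧ b = Sum.inr x) ∨
    (∃ j : Fin s, a = Sum.inr (j, 0) ∧ b = Sum.inr (j, 1)))

/-- `A″_s = K₂ + (2K₂ ∪ K_s)`. -/
def ADoublePrime (s : ℕ) : SimpleGraph (Fin 2 ⊕ (Fin 2 × Fin 2 ⊕ Fin s)) :=
  SimpleGraph.fromRel (fun a b =>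
    (∃ i : Fin 2, a = Sum.inl i) ∨
    (∃ j : Fin 2, a = Sum.inr (Sum.inl (j, 0)) ∧ b = Sum.inr (Sum.inl (j, 1))) ∨
    (∃ p q : Fin s, a = Sum.inr (Sum.inr p) ∧ b = Sum.inr (Sum.inr q)))

/-- `A_s⁽¹⁾`: two disjoint triangles joined by three vertex-disjoint paths with `s`
internal vertices each. -/
def AOne (s : ℕ) : SimpleGraph (Fin 2 × Fin 3 ⊕ Fin 3 × Fin s) :=
  SimpleGraph.fromRel (fun a b =>
    (∃ (t : Fin 2) (i j : Fin 3), a = Sum.inl (t, i) ∧ b = Sum.inl (t, j)) ∨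
    (∃ (j : Fin 3) (k : Fin s), a = Sum.inl (0, j) ∧ b = Sum.inr (j, k) ∧ (k : ℕ) = 0) ∨
    (∃ (j : Fin 3) (k : Fin s), a = Sum.inl (1, j) ∧ b = Sum.inr (j, k) ∧ (k : ℕ) = s - 1) ∨
    (∃ (j : Fin 3) (k l : Fin s), a = Sum.inr (j, k) ∧ b = Sum.inr (j, l) ∧ (l : ℕ) = (k : ℕ) + 1))

/-- `A_s⁽⁵⁾`: vertices `x₁, x₂` and `y_{i,j}`; edges `x₁x₂`, `y_{1,j}y_{2,j}`, `x_i y_{i,j}`. -/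
def AFive (s : ℕ) : SimpleGraph (Fin 2 ⊕ Fin 2 × Fin s) :=
  SimpleGraph.fromRel (fun a b =>
    (a = Sum.inl 0 ∧ b = Sum.inl 1) ∨
    (∃ j : Fin s, a = Sum.inr (0, j) ∧ b = Sum.inr (1, j)) ∨
    (∃ (i : Fin 2) (j : Fin s), a = Sum.inl i ∧ b = Sum.inr (i, j)))

lemma no_tri {V : Type*} {G : SimpleGraph V} (htri : G.CliqueFree 3) {a b c : V}
    (hab : G.Adj a b) (hbc : G.Adj b c) (hac : G.Adj a c) : False := by
  classical
  exact htri {a, b, c} (SimpleGraph.is3Clique_triple_iff.mpr ⟨hab, hac, hbc⟩)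

lemma zmod_add_ne {n : ℕ} (hn : 3 ≤ n) (i : ZMod n) {a b : ℕ}
    (ha : a < n) (hb : b < n) (hab : a ≠ b) : i + (a : ZMod n) ≠ i + (b : ZMod n) := by
  haveI : NeZero n := ⟨by omega⟩
  intro h
  have h2 := add_left_cancel h
  rw [ZMod.natCast_eq_natCast_iff] at h2
  unfold Nat.ModEq at h2
  rw [Nat.mod_eq_of_lt ha, Nat.mod_eq_of_lt hb] at h2
  exact hab h2
lemma extend_contra {V : Type*} {G : SimpleGraph V} {n : ℕ} {f : ZMod n → V}
    (hC : IsLongestCycle G n f) (i : ZMod n) (s t : ℕ)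
    (hs1 : 1 ≤ s) (ht1 : 1 ≤ t) (hts : t ≤ s) (htn : t < n)
    (p : ℕ → V)
    (hpinj : ∀ a < s, ∀ b < s, p a = p b → a = b)
    (hpf : ∀ j < s, p j ∉ Set.range f)
    (h1 : G.Adj (f i) (p 0)) (h2 : G.Adj (p (s-1)) (f (i + t)))
    (h3 : ∀ j, j + 1 < s → G.Adj (p j) (p (j+1))) : False := by
  obtain ⟨⟨hn3, hfinj, hfadj⟩, hmax⟩ := hC
  set m : ℕ := n - t + 1 + s with hm
  haveI : NeZero m := ⟨by omega⟩
  haveI : NeZero n := ⟨by omega⟩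
  set g : ZMod m → V := fun k => if k.val ≤ n - t then f (i + t + (k.val : ZMod n))
    else p (k.val - (n - t + 1)) with hg
  have hval : ∀ k : ZMod m, k.val < m := fun k => ZMod.val_lt k
  have hsucc : ∀ k : ZMod m, (k + 1).val = (k.val + 1) % m := by
    intro k
    rw [ZMod.val_add, ZMod.val_one_eq_one_mod, Nat.mod_eq_of_lt (show 1 < m by omega)]
  have hginj : Function.Injective g := by
    intro a b hab
    simp only [hg] at hab
    have hva := hval a; have hvb := hval b
    by_cases ha : a.val ≤ n - t <;> by_cases hb : b.val ≤ n - t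
    · rw [if_pos ha, if_pos hb] at hab
      have h4 := add_left_cancel (hfinj hab)
      rw [ZMod.natCast_eq_natCast_iff] at h4
      have h5 : a.val = b.val := by
        unfold Nat.ModEq at h4
        rwa [Nat.mod_eq_of_lt (by omega), Nat.mod_eq_of_lt (by omega)] at h4
      exact ZMod.val_injective _ h5
    · rw [if_pos ha, if_neg hb] at hab
      exact absurd ⟨_, hab⟩ (hpf (b.val - (n - t + 1)) (by omega))
    · rw [if_neg ha, if_pos hb] at hab
      exact absurd ⟨_, hab.symm⟩ (hpf (a.val - (n - t + 1)) (by omega))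
    · rw [if_neg ha, if_neg hb] at hab
      have := hpinj _ (by omega) _ (by omega) hab
      have h5 : a.val = b.val := by omega
      exact ZMod.val_injective _ h5
  have hgadj : ∀ k : ZMod m, G.Adj (g k) (g (k + 1)) := by
    intro k
    have ha := hval k
    have hb := hsucc k
    rcases lt_trichotomy k.val (n - t) with h | h | h
    · have hb' : (k + 1).val = k.val + 1 := by rw [hb]; exact Nat.mod_eq_of_lt (by omega)
      simp only [hg, if_pos h.le, hb', if_pos (by omega : k.val + 1 ≤ n - t)]
      have : ((k.val + 1 : ℕ) : ZMod n) = (k.val : ZMod n) + 1 := by push_cast; ring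
      rw [this, ← add_assoc]
      exact hfadj _
    · have hb' : (k + 1).val = k.val + 1 := by rw [hb]; exact Nat.mod_eq_of_lt (by omega)
      simp only [hg, if_pos h.le, hb', if_neg (by omega : ¬ (k.val + 1 ≤ n - t))]
      have e1 : i + (t : ZMod n) + ((k.val : ℕ) : ZMod n) = i := by
        rw [h]
        have : ((n - t : ℕ) : ZMod n) = (n : ZMod n) - (t : ZMod n) := by
          rw [Nat.cast_sub htn.le]
        rw [this, ZMod.natCast_self]
        ring
      rw [e1]
      have e2 : k.val + 1 - (n - t + 1) = 0 := by omega
      rw [e2]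
      exact h1
    · by_cases hlast : k.val = m - 1
      · have hb' : (k + 1).val = 0 := by
          have e : m - 1 + 1 = m := by omega
          rw [hb, hlast, e, Nat.mod_self]
        simp only [hg, if_neg (by omega : ¬ (k.val ≤ n - t)), hb',
          if_pos (by omega : (0:ℕ) ≤ n - t)]
        have e2 : k.val - (n - t + 1) = s - 1 := by omega
        rw [e2]
        have e3 : ((0:ℕ) : ZMod n) = 0 := Nat.cast_zero
        rw [e3, add_zero]
        exact h2
      · have hb' : (k + 1).val = k.val + 1 := by rw [hb]; exact Nat.mod_eq_of_lt (by omega)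
        simp only [hg, if_neg (by omega : ¬ (k.val ≤ n - t)), hb',
          if_neg (by omega : ¬ (k.val + 1 ≤ n - t))]
        have e2 : k.val + 1 - (n - t + 1) = (k.val - (n - t + 1)) + 1 := by omega
        rw [e2]
        exact h3 _ (by omega)
    
  have := hmax m g ⟨by omega, hginj, hgadj⟩
  omega

lemma no_chord1 {V : Type*} {G : SimpleGraph V} {n : ℕ} {f : ZMod n → V}
    (hC : IsLongestCycle G n f) (i : ZMod n) {z : V} (hz : z ∉ Set.range f)
    (h1 : G.Adj (f i) z) (h2 : G.Adj z (f (i + 1))) : False := by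
  have hn3 := hC.1.1
  refine extend_contra hC i 1 1 le_rfl le_rfl le_rfl (by omega) (fun _ => z)
    (fun a ha b hb _ => by omega) (fun j hj => hz) h1 ?_ (fun j hj => by omega)
  simpa using h2

lemma no_chord2 {V : Type*} {G : SimpleGraph V} {n : ℕ} {f : ZMod n → V}
    (hC : IsLongestCycle G n f) (i : ZMod n) {z w : V}
    (hz : z ∉ Set.range f) (hw : w ∉ Set.range f) (hzw : z ≠ w)
    (h1 : G.Adj (f i) z) (h2 : G.Adj z w) (h3 : G.Adj w (f (i + 1))) : False := by
  have hn3 := hC.1.1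
  refine extend_contra hC i 2 1 (by omega) le_rfl (by omega) (by omega)
    (fun j => if j = 0 then z else w) ?_ ?_ (by simpa using h1) ?_ ?_
  · intro a ha b hb h
    interval_cases a <;> interval_cases b <;> simp_all
  · intro j hj
    interval_cases j <;> simp [hz, hw, Set.mem_range] at *
  · simpa using h3
  · intro j hj
    have : j = 0 := by omega
    subst this
    simpa using h2

lemma no_chord2' {V : Type*} {G : SimpleGraph V} {n : ℕ} {f : ZMod n → V}
    (hC : IsLongestCycle G n f) (i : ZMod n) {z w : V}
    (hz : z ∉ Set.range f) (hw : w ∉ Set.range f) (hzw : z ≠ w)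
    (h1 : G.Adj (f i) z) (h2 : G.Adj z w) (h3 : G.Adj w (f (i + 2))) : False := by
  have hn3 := hC.1.1
  refine extend_contra hC i 2 2 (by omega) (by omega) le_rfl (by omega)
    (fun j => if j = 0 then z else w) ?_ ?_ (by simpa using h1) ?_ ?_
  · intro a ha b hb h
    interval_cases a <;> interval_cases b <;> simp_all
  · intro j hj
    interval_cases j <;> simp [hz, hw, Set.mem_range] at *
  · have : ((2:ℕ) : ZMod n) = 2 := by push_cast; ring
    rw [this]
    simpa using h3
  · intro j hj
    have : j = 0 := by omega
    subst this
    simpa using h2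

set_option maxHeartbeats 1000000 in
lemma half {V : Type*} (G : SimpleGraph V)
    (htri : G.CliqueFree 3) (hsp : HFree spider221 G)
    (n : ℕ) (f : ZMod n → V) (H : Set V) (x : V) (i : ZMod n)
    (hC : IsLongestCycle G n f)
    (hH : IsCompOutside G (Set.range f) H) (hH2 : 2 ≤ H.ncard)
    (hx : x ∈ H) (hadj : G.Adj (f i) x) :
    G.Adj (f (i + 2)) (f (i - 1)) ∨ G.Adj (f (i + 2)) x := by
  have hn3 := hC.1.1
  have hfinj := hC.1.2.1
  have hfadj := hC.1.2.2
  have hdisj := hH.2.1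
  have hconn := hH.2.2.1
  -- a neighbour y of x inside H
  obtain ⟨y0, hy0H, hy0x⟩ := Set.exists_ne_of_one_lt_ncard (show 1 < H.ncard by omega) x
  obtain ⟨w⟩ := hconn ⟨x, hx⟩ ⟨y0, hy0H⟩
  have hne : (⟨x, hx⟩ : H) ≠ ⟨y0, hy0H⟩ := by
    simp only [ne_eq, Subtype.mk.injEq]
    exact fun h => hy0x h.symm
  have hnn : ¬ w.Nil := SimpleGraph.Walk.not_nil_of_ne hne
  obtain ⟨b, hb, q, -⟩ := SimpleGraph.Walk.not_nil_iff.mp hnn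
  set y : V := (b : V) with hy
  have hyH : y ∈ H := b.2
  have hxy : G.Adj x y := hb
  clear hb
  -- basic memberships
  have hxR : x ∉ Set.range f := Set.disjoint_left.mp hdisj hx
  have hyR : y ∉ Set.range f := Set.disjoint_left.mp hdisj hyH
  -- n ≥ 4
  have hn4 : 4 ≤ n := by
    by_contra hlt
    have hn : n = 3 := by omega
    subst hn
    exact no_tri htri (hfadj 0) (hfadj 1) (by have h := (hfadj 2).symm; rwa [show (2:ZMod 3) + 1 = 0 by decide, show (2:ZMod 3) = 1 + 1 by decide] at h)
  -- cycle adjacencies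
  have A0 : G.Adj (f i) (f (i + 1)) := hfadj i
  have A1 : G.Adj (f (i + 1)) (f (i + 2)) := by
    have := hfadj (i + 1)
    have e : i + 1 + 1 = i + 2 := by ring
    rwa [e] at this
  have A2 : G.Adj (f (i - 1)) (f i) := by
    have := hfadj (i - 1)
    have e : i - 1 + 1 = i := by ring
    rwa [e] at this
  -- assume both conclusions fail
  by_contra hcon
  push_neg at hcon
  obtain ⟨hA, hB⟩ := hcon
  -- non-adjacencies
  have N02 : ¬ G.Adj (f i) (f (i + 2)) := fun h => no_tri htri A0 A1 h
  have N04 : ¬ G.Adj (f i) y := fun h => no_tri htri hadj hxy h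
  have N13 : ¬ G.Adj (f (i + 1)) x := fun h => no_chord1 hC i hxR hadj h.symm
  have N14 : ¬ G.Adj (f (i + 1)) y :=
    fun h => no_chord2 hC i hxR hyR hxy.ne hadj hxy h.symm
  have N15 : ¬ G.Adj (f (i + 1)) (f (i - 1)) := fun h => no_tri htri A2 A0 h.symm
  have N24 : ¬ G.Adj (f (i + 2)) y :=
    fun h => no_chord2' hC i hxR hyR hxy.ne hadj hxy h.symm
  have N35 : ¬ G.Adj (f (i - 1)) x := by
    intro h
    refine no_chord1 hC (i - 1) hxR h ?_
    have e : i - 1 + 1 = i := by ring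
    rw [e]
    exact hadj.symm
  have N45 : ¬ G.Adj (f (i - 1)) y := by
    intro h
    refine no_chord2 hC (i - 1) hyR hxR (hxy.ne).symm h hxy.symm ?_
    have e : i - 1 + 1 = i := by ring
    rw [e]
    exact hadj.symm
  -- distinctness of the cycle indices
  have e0 : i = i + ((0 : ℕ) : ZMod n) := by push_cast; ring
  have e1 : i + 1 = i + ((1 : ℕ) : ZMod n) := by push_cast; ring
  have e2 : i + 2 = i + ((2 : ℕ) : ZMod n) := by push_cast; ring
  have e3 : i - 1 = i + ((n - 1 : ℕ) : ZMod n) := by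
    rw [Nat.cast_sub (by omega), ZMod.natCast_self]
    push_cast
    ring
  have dI : ∀ (a b : ℕ), a < n → b < n → a ≠ b → f (i + (a : ZMod n)) ≠ f (i + (b : ZMod n)) :=
    fun a b ha hb hab h => zmod_add_ne hn3 i ha hb hab (hfinj h)
  have d01 : f i ≠ f (i + 1) := by
    have := dI 0 1 (by omega) (by omega) (by omega); simpa using this
  have d02 : f i ≠ f (i + 2) := by
    have := dI 0 2 (by omega) (by omega) (by omega); simpa using this
  have d05 : f i ≠ f (i - 1) := by
    have := dI 0 (n-1) (by omega) (by omega) (by omega)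
    rw [← e3] at this; simpa using this
  have d12 : f (i + 1) ≠ f (i + 2) := by
    have := dI 1 2 (by omega) (by omega) (by omega); simpa using this
  have d15 : f (i + 1) ≠ f (i - 1) := by
    have := dI 1 (n-1) (by omega) (by omega) (by omega)
    rw [← e3] at this; simpa using this
  have d25 : f (i + 2) ≠ f (i - 1) := by
    have := dI 2 (n-1) (by omega) (by omega) (by omega)
    rw [← e3] at this; simpa using this
  have d03 : f i ≠ x := fun h => hxR ⟨i, h⟩
  have d04 : f i ≠ y := fun h => hyR ⟨i, h⟩
  have d13 : f (i + 1) ≠ x := fun h => hxR ⟨i + 1, h⟩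
  have d14 : f (i + 1) ≠ y := fun h => hyR ⟨i + 1, h⟩
  have d23 : f (i + 2) ≠ x := fun h => hxR ⟨i + 2, h⟩
  have d24 : f (i + 2) ≠ y := fun h => hyR ⟨i + 2, h⟩
  have d53 : f (i - 1) ≠ x := fun h => hxR ⟨i - 1, h⟩
  have d54 : f (i - 1) ≠ y := fun h => hyR ⟨i - 1, h⟩
  have d34 : x ≠ y := hxy.ne
  -- the spider embedding
  apply hsp
  refine ⟨⟨⟨![f i, f (i + 1), f (i + 2), x, y, f (i - 1)], ?_⟩, ?_⟩⟩
  · intro a b hab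
    fin_cases a <;> fin_cases b <;> simp only [Fin.isValue] at hab ⊢ <;>
      simp at hab <;>
      first
        | rfl
        | exact absurd hab (by assumption)
        | exact absurd hab.symm (by assumption)
  · intro a b
    fin_cases a <;> fin_cases b <;>
      simp [spider221] <;>
      first
        | exact fun h => h.ne rfl
        | exact A0 | exact A0.symm | exact A1 | exact A1.symm
        | exact A2 | exact A2.symm | exact hadj | exact hadj.symm
        | exact hxy | exact hxy.symm
        | exact N02 | exact fun h => N02 h.symm
        | exact N04 | exact fun h => N04 h.symm
        | exact N13 | exact fun h => N13 h.symm
        | exact N14 | exact fun h => N14 h.symm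
        | exact N15 | exact fun h => N15 h.symm
        | exact N24 | exact fun h => N24 h.symm
        | exact hA | exact fun h => hA h.symm
        | exact hB | exact fun h => hB h.symm
        | exact N35 | exact fun h => N35 h.symm
        | exact N45 | exact fun h => N45 h.symm


/-- In a `{K₁,₃**, K₃}`-free graph, for a longest cycle `C` with at least 2 missing
vertices, a component `H` of `G - V(C)` with `|H| ≥ 2`, `x ∈ H` and `u = f i ∈ V(C)`
adjacent to `x`: `E(G) ∩ {u⁺²u⁻, u⁺²x} ≠ ∅` and `E(G) ∩ {u⁻²u⁺, u⁻²x} ≠ ∅`. -/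
theorem stmt7 {V : Type*} [Fintype V] (G : SimpleGraph V)
    (htri : G.CliqueFree 3) (hsp : HFree spider221 G)
    (n : ℕ) (f : ZMod n → V) (H : Set V) (x : V) (i : ZMod n)
    (hC : IsLongestCycle G n f)
    (hmiss : 2 ≤ ((Set.range f)ᶜ : Set V).ncard)
    (hH : IsCompOutside G (Set.range f) H) (hH2 : 2 ≤ H.ncard)
    (hx : x ∈ H) (hadj : G.Adj (f i) x) :
    (G.Adj (f (i + 2)) (f (i - 1)) ∨ G.Adj (f (i + 2)) x) ∧
    (G.Adj (f (i - 2)) (f (i + 1)) ∨ G.Adj (f (i - 2)) x) := by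
  constructor
  · exact half G htri hsp n f H x i hC hH hH2 hx hadj
  · set f' : ZMod n → V := fun j => f (-j) with hf'
    have hrange : Set.range f' = Set.range f := by
      ext v
      constructor
      · rintro ⟨j, rfl⟩; exact ⟨-j, rfl⟩
      · rintro ⟨j, rfl⟩; exact ⟨-j, by simp [hf']⟩
    have hC' : IsLongestCycle G n f' := by
      refine ⟨⟨hC.1.1, ?_, ?_⟩, hC.2⟩
      · intro a b hab
        have := hC.1.2.1 hab
        exact neg_injective this
      · intro j
        have := hC.1.2.2 (-(j + 1))
        have e : -(j + 1) + 1 = -j := by ring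
        rw [e] at this
        exact this.symm
    have hH' : IsCompOutside G (Set.range f') H := by rw [hrange]; exact hH
    have hadj' : G.Adj (f' (-i)) x := by simp [hf']; exact hadj
    have := half G htri hsp n f' H x (-i) hC' hH' hH2 hx hadj'
    have e1 : f' (-i + 2) = f (i - 2) := by simp only [hf']; congr 1; ring
    have e2 : f' (-i - 1) = f (i + 1) := by simp only [hf']; congr 1; ring
    rwa [e1, e2] at this
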